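/- Tail bound of type II: for positive integers n and real a := Δt‖W_s‖, B̄ ≥ 0, the sum Σ_{m=n+1}^{2n} C(2n+2m−1, 2n−1)·a^{2m}·(2m−1)!!·B̄^m is bounded by 36·Δt²·(nΔt)²·‖W_s‖⁴·B̄²·exp(18 n²Δt²‖W_s‖²B̄). -/

import Mathlib

open scoped Nat

lemma fact_le_pow_mul_fact (b c : ℕ) : ∀ j, b + j ≤ c → (b + j)! ≤ c ^ j * b !
  | 0, _ => by simp
  | j+1, h => by
    have h' : b + j ≤ c := by omega
    calc (b + (j+1))! = (b + j + 1) * (b + j)! := by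
          rw [show b + (j+1) = b + j + 1 by ring, Nat.factorial_succ]
    _ ≤ c * (c ^ j * b !) := Nat.mul_le_mul (by omega) (fact_le_pow_mul_fact b c j h')
    _ = c ^ (j+1) * b ! := by ring

lemma coeff_bound' (q k : ℕ) (hk1 : q ≤ k) (hk2 : k ≤ 2 * q) :
    Nat.choose (2*q + 2*k + 5) (2*q + 1) * (2*k + 3)‼ * k ! ≤
      36 * (q+1)^2 * (18 * (q+1)^2) ^ k := by
  set E := Nat.choose (2*q + 2*k + 5) (2*q + 1) * (2*k + 3)‼ with hE
  have hch : Nat.choose (2*q + 2*k + 5) (2*q + 1) * (2*q + 1)! * (2*k + 4)!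
      = (2*q + 2*k + 5)! := by
    have := Nat.choose_mul_factorial_mul_factorial
      (show 2*q + 1 ≤ 2*q + 2*k + 5 by omega)
    rwa [show 2*q + 2*k + 5 - (2*q + 1) = 2*k + 4 by omega] at this
  have hdf : (2*k + 4)! = 2 ^ (k+2) * (k+2)! * (2*k + 3)‼ := by
    have h1 := Nat.factorial_eq_mul_doubleFactorial (2*k + 3)
    have h2 := Nat.doubleFactorial_two_mul (k + 2)
    rw [show 2*k + 3 + 1 = 2*k + 4 by omega] at h1
    rw [show 2 * (k + 2) = 2*k + 4 by omega] at h2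
    rw [h1, h2]
  have hid : E * (2 ^ (k+2) * (k+2)!) * (2*q + 1)! = (2*q + 2*k + 5)! := by
    rw [← hch, hdf]; ring
  have hfb : (2*q + 2*k + 5)! ≤
      (36 * (q+1)^2) ^ k * (144 * (q+1)^2 * ((k+2) * (k+1))) * (2*q + 1)! := by
    have h1 : (2*q + 5 + 2*k)! ≤ (6 * (q+1)) ^ (2*k) * (2*q + 5)! :=
      fact_le_pow_mul_fact (2*q + 5) (6 * (q+1)) (2*k) (by omega)
    rw [show 2*q + 5 + 2*k = 2*q + 2*k + 5 by omega] at h1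
    have h2 : (2*q + 5)! = (2*q + 5) * (2*q + 4) * (2*q + 3) * (2*q + 2) * (2*q + 1)! := by
      simp [show 2*q+5 = (2*q+1)+4 by omega, Nat.factorial_succ]
      ring
    calc (2*q + 2*k + 5)! ≤ (6 * (q+1)) ^ (2*k) * (2*q + 5)! := h1
    _ = (36 * (q+1)^2) ^ k * ((2*q + 5) * (2*q + 4) * (2*q + 3) * (2*q + 2)) * (2*q + 1)! := by
        rw [h2, pow_mul, show (6 * (q+1))^2 = 36 * (q+1)^2 by ring]
        ring
    _ ≤ (36 * (q+1)^2) ^ k * (144 * (q+1)^2 * ((k+2) * (k+1))) * (2*q + 1)! := by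
        apply Nat.mul_le_mul_right
        apply Nat.mul_le_mul_left
        calc (2*q + 5) * (2*q + 4) * (2*q + 3) * (2*q + 2)
            ≤ 144 * (q+1)^2 * ((q+2) * (q+1)) := by nlinarith
        _ ≤ 144 * (q+1)^2 * ((k+2) * (k+1)) := by
            apply Nat.mul_le_mul_left
            exact Nat.mul_le_mul (by omega) (by omega)
  have h3 : E * (2 ^ (k+2) * (k+2)!) ≤ (36 * (q+1)^2) ^ k * (144 * (q+1)^2 * ((k+2) * (k+1))) :=
    Nat.le_of_mul_le_mul_right (by rw [hid]; exact hfb) (Nat.factorial_pos _)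
  have h4 : (E * k !) * (2 ^ (k+2) * ((k+2) * (k+1)))
      ≤ (36 * (q+1)^2 * (18 * (q+1)^2) ^ k) * (2 ^ (k+2) * ((k+2) * (k+1))) := by
    have hkf : (k+2)! = (k+2) * ((k+1) * k !) := by
      rw [Nat.factorial_succ, Nat.factorial_succ]
    calc (E * k !) * (2 ^ (k+2) * ((k+2) * (k+1)))
        = E * (2 ^ (k+2) * (k+2)!) := by rw [hkf]; ring
    _ ≤ (36 * (q+1)^2) ^ k * (144 * (q+1)^2 * ((k+2) * (k+1))) := h3
    _ = (36 * (q+1)^2 * (18 * (q+1)^2) ^ k) * (2 ^ (k+2) * ((k+2) * (k+1))) := by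
        rw [show (36 : ℕ) * (q+1)^2 = 2 * (18 * (q+1)^2) by ring, mul_pow, pow_add]
        ring
  exact Nat.le_of_mul_le_mul_right h4 (by positivity)

/-- Tail bound of type II: with `a = Δt‖W_s‖`, the sum
`Σ_{m=n+1}^{2n} C(2n+2m−1, 2n−1)·a^{2m}·(2m−1)!!·B̄^m` is bounded by
`36·Δt²·(nΔt)²·‖W_s‖⁴·B̄²·exp(18 n²Δt²‖W_s‖²B̄)`. -/
theorem tail_bound_type_II (n : ℕ) (hn : 1 ≤ n) (Δt Ws Bbar : ℝ)
    (hΔt : 0 ≤ Δt) (hWs : 0 ≤ Ws) (hB : 0 ≤ Bbar) :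
    (∑ m ∈ Finset.Icc (n + 1) (2 * n),
        (Nat.choose (2 * n + 2 * m - 1) (2 * n - 1) : ℝ) * (Δt * Ws) ^ (2 * m) *
          (((2 * m - 1)‼ : ℕ) : ℝ) * Bbar ^ m)
      ≤ 36 * Δt ^ 2 * (n * Δt) ^ 2 * Ws ^ 4 * Bbar ^ 2 *
          Real.exp (18 * n ^ 2 * Δt ^ 2 * Ws ^ 2 * Bbar) := by
  set x : ℝ := Δt ^ 2 * Ws ^ 2 * Bbar with hx
  have hx0 : 0 ≤ x := by positivity
  set y : ℝ := 18 * n ^ 2 * x with hy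
  have hy0 : 0 ≤ y := by positivity
  clear_value y
  clear_value x
  have key : ∀ m ∈ Finset.Icc (n + 1) (2 * n),
      (Nat.choose (2 * n + 2 * m - 1) (2 * n - 1) : ℝ) * (Δt * Ws) ^ (2 * m) *
          (((2 * m - 1)‼ : ℕ) : ℝ) * Bbar ^ m
        ≤ 36 * n ^ 2 * x ^ 2 * (y ^ (m - 2) / (m - 2)!) := by
    intro m hmem
    simp only [Finset.mem_Icc] at hmem
    obtain ⟨hm1, hm2⟩ := hmem
    obtain ⟨q, rfl⟩ : ∃ q, n = q + 1 := ⟨n - 1, by omega⟩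
    obtain ⟨k, rfl⟩ : ∃ k, m = k + 2 := ⟨m - 2, by omega⟩
    have hk1 : q ≤ k := by omega
    have hk2 : k ≤ 2 * q := by omega
    rw [show 2 * (q+1) + 2 * (k+2) - 1 = 2*q + 2*k + 5 by omega,
      show 2 * (q+1) - 1 = 2*q + 1 by omega,
      show 2 * (k+2) - 1 = 2*k + 3 by omega,
      show k + 2 - 2 = k by omega]
    have hterm : (Nat.choose (2*q + 2*k + 5) (2*q + 1) : ℝ) * (Δt * Ws) ^ (2 * (k+2)) *
        (((2*k + 3)‼ : ℕ) : ℝ) * Bbar ^ (k+2)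
        = ((Nat.choose (2*q + 2*k + 5) (2*q + 1) * (2*k + 3)‼ : ℕ) : ℝ) * x ^ (k+2) := by
      rw [hx, pow_mul, mul_pow, mul_pow, mul_pow, ← pow_mul, ← pow_mul]
      push_cast
      ring
    rw [hterm]
    have hc := coeff_bound' q k hk1 hk2
    have hcR : ((Nat.choose (2*q + 2*k + 5) (2*q + 1) * (2*k + 3)‼ : ℕ) : ℝ)
        ≤ 36 * ((q:ℝ)+1) ^ 2 * (18 * ((q:ℝ)+1) ^ 2) ^ k / k ! := by
      rw [le_div_iff₀ (by positivity)]
      calc ((Nat.choose (2*q + 2*k + 5) (2*q + 1) * (2*k + 3)‼ : ℕ) : ℝ) * (k !)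
          = ((Nat.choose (2*q + 2*k + 5) (2*q + 1) * (2*k + 3)‼ * k ! : ℕ) : ℝ) := by
            push_cast; ring
      _ ≤ ((36 * (q+1)^2 * (18 * (q+1)^2) ^ k : ℕ) : ℝ) := by exact_mod_cast hc
      _ = 36 * ((q:ℝ)+1) ^ 2 * (18 * ((q:ℝ)+1) ^ 2) ^ k := by push_cast; ring
    calc ((Nat.choose (2*q + 2*k + 5) (2*q + 1) * (2*k + 3)‼ : ℕ) : ℝ) * x ^ (k+2)
        ≤ (36 * ((q:ℝ)+1) ^ 2 * (18 * ((q:ℝ)+1) ^ 2) ^ k / k !) * x ^ (k+2) :=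
          mul_le_mul_of_nonneg_right hcR (by positivity)
    _ = 36 * ((q:ℝ)+1) ^ 2 * x ^ 2 * (y ^ k / k !) := by
        rw [hy]
        simp only [mul_pow]
        push_cast
        ring
    _ = 36 * ((q+1 : ℕ) : ℝ) ^ 2 * x ^ 2 * (y ^ k / k !) := by push_cast; ring
  refine (Finset.sum_le_sum key).trans ?_
  rw [← Finset.mul_sum]
  have hsum2 : (∑ m ∈ Finset.Icc (n + 1) (2 * n), y ^ (m - 2) / (m - 2)!)
      ≤ Real.exp y := by
    have himg : Finset.Icc (n + 1) (2 * n)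
        = (Finset.Icc (n - 1) (2 * n - 2)).image (· + 2) := by
      ext a
      simp only [Finset.mem_image, Finset.mem_Icc]
      constructor
      · intro h; exact ⟨a - 2, by omega, by omega⟩
      · rintro ⟨b, hb, rfl⟩; omega
    rw [himg, Finset.sum_image (by intro a _ b _ h; exact Nat.add_right_cancel h)]
    simp only [Nat.add_sub_cancel]
    calc (∑ k ∈ Finset.Icc (n - 1) (2 * n - 2), y ^ k / k !)
        ≤ ∑ k ∈ Finset.range (2 * n), y ^ k / k ! := by
          apply Finset.sum_le_sum_of_subset_of_nonneg
          · intro k hk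
            simp only [Finset.mem_Icc] at hk
            simp only [Finset.mem_range]
            omega
          · intros; positivity
    _ ≤ Real.exp y := Real.sum_le_exp_of_nonneg hy0 _
  calc 36 * (n:ℝ) ^ 2 * x ^ 2 * (∑ m ∈ Finset.Icc (n + 1) (2 * n), y ^ (m - 2) / (m - 2)!)
      ≤ 36 * (n:ℝ) ^ 2 * x ^ 2 * Real.exp y :=
        mul_le_mul_of_nonneg_left hsum2 (by positivity)
  _ = 36 * Δt ^ 2 * ((n:ℝ) * Δt) ^ 2 * Ws ^ 4 * Bbar ^ 2 *
        Real.exp (18 * (n:ℝ) ^ 2 * Δt ^ 2 * Ws ^ 2 * Bbar) := by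
      rw [hy, hx]
      ring_nf
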